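/- Let n ≥ 1, m ≥ 1 and let σ_1, …, σ_n be a ranking profile of permutations of {1, …, m}. The function D(x) = 1/(1 + (1/n)·∑_{v=1}^n ∑_{c=1}^m (σ_v(c) − x_c)²) on ℝ^m attains its maximum at a unique point, namely the mean vector x̄ with coordinates x̄_c = (1/n)·∑_{v=1}^n σ_v(c). Consequently, a candidate c* has minimal coordinate in the (unique) deepest point x̄ if and only if c* minimizes the Borda score ∑_{v=1}^n σ_v(c) over all candidates c; that is, the continuous L²-deepest voting winners are exactly the Borda winners. -/

import Mathlib

open Finset

/-- The rank (in `{1, …, m}`) that the ranking `σ` assigns to candidate `c`. -/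
def rk {m : ℕ} (σ : Equiv.Perm (Fin m)) (c : Fin m) : ℕ := (σ c : ℕ) + 1

/-- The mean vector of the profile: `x̄ c = (1/n) ∑ᵥ σᵥ(c)`. -/
noncomputable def xbar {n m : ℕ} (σs : Fin n → Equiv.Perm (Fin m)) : Fin m → ℝ :=
  fun c => (1 / (n : ℝ)) * ∑ v, (rk (σs v) c : ℝ)

/-- The continuous L² depth of a point `x ∈ ℝ^m` w.r.t. the ranking profile. -/
noncomputable def depthL2 {n m : ℕ} (σs : Fin n → Equiv.Perm (Fin m)) (x : Fin m → ℝ) : ℝ :=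
  1 / (1 + (1 / (n : ℝ)) * ∑ v, ∑ c, ((rk (σs v) c : ℝ) - x c) ^ 2)

lemma bias_var {n : ℕ} (hn : 0 < n) (a : Fin n → ℝ) (x : ℝ) :
    ∑ v, (a v - x) ^ 2
      = ∑ v, (a v - (1 / (n : ℝ)) * ∑ w, a w) ^ 2
        + n * (x - (1 / (n : ℝ)) * ∑ w, a w) ^ 2 := by
  have hn' : (n : ℝ) ≠ 0 := by positivity
  set μ := (1 / (n : ℝ)) * ∑ w, a w with hμ
  have hsum : ∑ w, a w = (n : ℝ) * μ := by rw [hμ, ← mul_assoc, mul_one_div_cancel hn', one_mul]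
  have key : ∑ v, ((a v - x) ^ 2 - (a v - μ) ^ 2) = (n : ℝ) * (x - μ) ^ 2 := by
    have h1 : ∀ v, (a v - x) ^ 2 - (a v - μ) ^ 2
        = 2 * (μ - x) * a v - (μ - x) * (x + μ) := by intro v; ring
    simp_rw [h1]
    rw [Finset.sum_sub_distrib, ← Finset.mul_sum, hsum, Finset.sum_const,
      Finset.card_univ, Fintype.card_fin, nsmul_eq_mul]
    ring
  have := Finset.sum_sub_distrib (f := fun v => (a v - x) ^ 2)
    (g := fun v => (a v - μ) ^ 2) (s := (Finset.univ : Finset (Fin n)))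
  linarith [key, this]

theorem stmt_0 (n m : ℕ) (hn : 1 ≤ n) (hm : 1 ≤ m)
    (σs : Fin n → Equiv.Perm (Fin m)) :
    (∀ x : Fin m → ℝ, x ≠ xbar σs → depthL2 σs x < depthL2 σs (xbar σs)) ∧
    (∀ cstar : Fin m,
      (∀ c, xbar σs cstar ≤ xbar σs c) ↔
      (∀ c, ∑ v, rk (σs v) cstar ≤ ∑ v, rk (σs v) c)) := by
  have hn0 : 0 < n := hn
  have hnR : (0 : ℝ) < (n : ℝ) := by exact_mod_cast hn0
  have hnR' : (n : ℝ) ≠ 0 := ne_of_gt hnR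
  -- sum decomposition
  have hswap : ∀ x : Fin m → ℝ,
      ∑ v, ∑ c, ((rk (σs v) c : ℝ) - x c) ^ 2
        = ∑ c, ∑ v, ((rk (σs v) c : ℝ) - x c) ^ 2 := fun x => Finset.sum_comm
  have hdecomp : ∀ x : Fin m → ℝ,
      ∑ v, ∑ c, ((rk (σs v) c : ℝ) - x c) ^ 2
        = ∑ v, ∑ c, ((rk (σs v) c : ℝ) - xbar σs c) ^ 2
          + (n : ℝ) * ∑ c, (x c - xbar σs c) ^ 2 := by
    intro x
    rw [hswap x, hswap (xbar σs), Finset.mul_sum, ← Finset.sum_add_distrib]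
    refine Finset.sum_congr rfl fun c _ => ?_
    exact bias_var hn0 (fun v => (rk (σs v) c : ℝ)) (x c)
  constructor
  · intro x hx
    have hS0 : (0 : ℝ) ≤ ∑ v, ∑ c, ((rk (σs v) c : ℝ) - xbar σs c) ^ 2 := by
      positivity
    have hpos : ∃ c, x c ≠ xbar σs c := by
      by_contra h
      push_neg at h
      exact hx (funext h)
    obtain ⟨c0, hc0⟩ := hpos
    have hsq : (0 : ℝ) < ∑ c, (x c - xbar σs c) ^ 2 := by
      have : (0 : ℝ) < (x c0 - xbar σs c0) ^ 2 := by
        have : x c0 - xbar σs c0 ≠ 0 := sub_ne_zero.mpr hc0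
        positivity
      refine lt_of_lt_of_le this ?_
      exact Finset.single_le_sum (f := fun c => (x c - xbar σs c) ^ 2)
        (fun c _ => by positivity) (Finset.mem_univ c0)
    unfold depthL2
    rw [hdecomp x]
    set S := ∑ v, ∑ c, ((rk (σs v) c : ℝ) - xbar σs c) ^ 2
    set T := ∑ c, (x c - xbar σs c) ^ 2
    have hden : (0 : ℝ) < 1 + 1 / (n : ℝ) * S := by
      have : (0 : ℝ) ≤ 1 / (n : ℝ) * S := by positivity
      linarith
    have heq : 1 / (n : ℝ) * (S + (n : ℝ) * T) = 1 / (n : ℝ) * S + T := by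
      field_simp
    rw [heq]
    exact div_lt_div_of_pos_left one_pos hden (by linarith)
  · intro cstar
    have cast_iff : ∀ c : Fin m,
        (xbar σs cstar ≤ xbar σs c ↔ ∑ v, rk (σs v) cstar ≤ ∑ v, rk (σs v) c) := by
      intro c
      unfold xbar
      rw [mul_le_mul_iff_right₀ (by positivity : (0:ℝ) < 1 / (n : ℝ))]
      push_cast
      exact_mod_cast Iff.rfl
    constructor
    · intro h c; exact (cast_iff c).mp (h c)
    · intro h c; exact (cast_iff c).mpr (h c)
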